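/- For all integers i, j and any polynomial g(s,t) ∈ ℂ[s,t], with D_i(g)(s,t) = λ^i·(s + iγ)·g(s−i, t) and F_j(g)(s,t) = −(λ^j/α)·(t/2 − β)(t/2 + β + 1)·g(s−j, t+2), one has (D_i ∘ F_j − F_j ∘ D_i)(g)(s,t) = j·(−λ^{i+j}/α)·(t/2 − β)(t/2 + β + 1)·g(s−i−j, t+2), i.e., [d_i, f_j] acts as j·f_{i+j}. -/
import Mathlib

open MvPolynomial

abbrev R2 : Type := MvPolynomial (Fin 2) ℂ

/-- Substitution `g(s,t) ↦ g(s - u, t + v)`. -/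
noncomputable def sh (u v : ℂ) : R2 →ₐ[ℂ] R2 := aeval ![X 0 - C u, X 1 + C v]

/-- Action of `e_i` in `Ω(λ,α,β,γ)`. -/
noncomputable def omE (lam a : ℂ) (i : ℤ) (g : R2) : R2 :=
  C (lam ^ i * a) * sh (i : ℂ) (-2) g

/-- Action of `f_i` in `Ω(λ,α,β,γ)`. -/
noncomputable def omF (lam a b : ℂ) (i : ℤ) (g : R2) : R2 :=
  C (-(lam ^ i / a)) * (C 2⁻¹ * X 1 - C b) * (C 2⁻¹ * X 1 + C b + 1) * sh (i : ℂ) 2 g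

/-- Action of `h_i`. -/
noncomputable def opH (lam : ℂ) (i : ℤ) (g : R2) : R2 :=
  C (lam ^ i) * X 1 * sh (i : ℂ) 0 g

/-- Action of `d_i`. -/
noncomputable def opD (lam c : ℂ) (i : ℤ) (g : R2) : R2 :=
  C (lam ^ i) * (X 0 + C ((i : ℂ) * c)) * sh (i : ℂ) 0 g

lemma sh_X0 (u v : ℂ) : sh u v (X 0) = X 0 - C u := by simp [sh]
lemma sh_X1 (u v : ℂ) : sh u v (X 1) = X 1 + C v := by simp [sh]
lemma sh_C (u v k : ℂ) : sh u v (C k) = C k := by simp [sh]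

lemma sh_sh (u v u' v' : ℂ) (g : R2) :
    sh u v (sh u' v' g) = sh (u + u') (v + v') g := by
  have : (sh u v).comp (sh u' v') = sh (u + u') (v + v') := by
    apply MvPolynomial.algHom_ext
    intro n
    fin_cases n <;>
      simp [sh, map_add, map_sub, Matrix.cons_val_zero, Matrix.cons_val_one] <;> ring
  exact congrArg (fun f => f g) this

theorem stmt2 (lam a : ℂ) (hlam : lam ≠ 0) (ha : a ≠ 0) (b c : ℂ) (i j : ℤ)
    (g : R2) :
    opD lam c i (omF lam a b j g) - omF lam a b j (opD lam c i g)
      = (j : ℂ) • omF lam a b (i + j) g := by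
  simp only [opD, omF, map_mul, map_add, map_sub, map_one, sh_C, sh_X0, sh_X1, sh_sh,
    smul_eq_C_mul, zpow_add₀ hlam, Int.cast_add]
  have h1 : (i : ℂ) + (j : ℂ) = (j : ℂ) + (i : ℂ) := by ring
  have h2 : (0 : ℂ) + 2 = 2 + 0 := by ring
  rw [h1, h2]
  simp only [div_eq_mul_inv, map_neg, C_mul, C_0, C_1]
  ring_nf
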